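/- Let 0 < p_1 < p_0 < 1. Then the chain of strict inequalities (p_1/(1 − p_1))/(p_0/(1 − p_0)) < log(1 − p_1)/log(1 − p_0) < p_1/p_0 holds; that is, OR < CLR < RR, so when the risk ratio is below one, the odds ratio underestimates it more severely than the complementary log ratio. -/

import Mathlib

/-- For `0 < p₁ < p₀ < 1`: `OR < CLR < RR`, i.e. when the risk ratio is below one,
the odds ratio underestimates it more severely than the complementary log ratio. -/
theorem OR_lt_CLR_lt_RR (p₀ p₁ : ℝ) (h0 : 0 < p₁) (h10 : p₁ < p₀) (h1 : p₀ < 1) :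
    (p₁ / (1 - p₁)) / (p₀ / (1 - p₀)) < Real.log (1 - p₁) / Real.log (1 - p₀) ∧
    Real.log (1 - p₁) / Real.log (1 - p₀) < p₁ / p₀ := by
  have hp0 : 0 < p₀ := lt_trans h0 h10
  have ha0 : 0 < 1 - p₀ := by linarith
  have hb0 : 0 < 1 - p₁ := by linarith
  have hla : Real.log (1 - p₀) < 0 := Real.log_neg ha0 (by linarith)
  constructor
  · -- OR < CLR
    set s : ℝ := (1 - p₀) * p₁ / ((1 - p₁) * p₀) with hs
    have hs0 : 0 < s := by positivity
    have hs1 : s < 1 := by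
      rw [hs, div_lt_one (by positivity)]
      nlinarith
    have hne : (1:ℝ) / (1 - p₀) ≠ 1 := by
      intro h
      have : (1:ℝ) = 1 - p₀ := by
        field_simp at h; linarith
      linarith
    have key := strictConcaveOn_log_Ioi.2 (Set.mem_Ioi.2 (by positivity : (0:ℝ) < 1 / (1 - p₀)))
      (Set.mem_Ioi.2 one_pos) hne hs0 (by linarith : 0 < 1 - s) (by ring)
    have hcombo : s • (1 / (1 - p₀)) + (1 - s) • (1:ℝ) = 1 / (1 - p₁) := by
      rw [hs, smul_eq_mul, smul_eq_mul]; field_simp; ring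
    rw [hcombo, smul_eq_mul, smul_eq_mul, Real.log_one, mul_zero, add_zero,
      one_div, one_div, Real.log_inv, Real.log_inv] at key
    -- key : s * -log (1-p₀) < -log (1-p₁)
    have hlb : Real.log (1 - p₁) < s * Real.log (1 - p₀) := by linarith
    have : s < Real.log (1 - p₁) / Real.log (1 - p₀) :=
      (lt_div_iff_of_neg hla).2 hlb
    calc p₁ / (1 - p₁) / (p₀ / (1 - p₀)) = s := by
          rw [hs]; field_simp
      _ < _ := this
  · -- CLR < RR
    set t : ℝ := p₁ / p₀ with ht
    have ht0 : 0 < t := by positivity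
    have ht1 : t < 1 := (div_lt_one hp0).2 h10
    have hne : (1 - p₀) ≠ 1 := by intro h; linarith
    have key := strictConcaveOn_log_Ioi.2 (Set.mem_Ioi.2 ha0)
      (Set.mem_Ioi.2 one_pos) hne ht0 (by linarith : 0 < 1 - t) (by ring)
    have hcombo : t • (1 - p₀) + (1 - t) • (1:ℝ) = 1 - p₁ := by
      rw [ht, smul_eq_mul, smul_eq_mul]; field_simp; ring
    rw [hcombo, smul_eq_mul, smul_eq_mul, Real.log_one, mul_zero, add_zero] at key
    exact (div_lt_iff_of_neg hla).2 key
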